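/- Let H be a Hopf algebra over a commutative ring k and let A and B be unital associative k-algebras with left H-module algebra actions. Suppose there exists an H-equivariant (B,A)-bimodule E whose left-multiplication map λ : B → End_A(E) is a bijection onto the right-A-linear endomorphisms of E. If the H-action on A admits a momentum map, then the H-action on B admits a momentum map. In particular, the existence of a momentum map is invariant under H-equivariant Morita equivalence. -/

import Mathlib

open scoped TensorProduct

noncomputable section

namespace EquivariantMorita

/-- The Sweedler-type map `h ↦ μ (f h₍₁₎) (g h₍₂₎)` (with implicit summation over the
Sweedler decomposition `Δ h = h₍₁₎ ⊗ h₍₂₎` of the comultiplication). -/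
def sw (k : Type*) {H M N P : Type*} [CommRing k]
    [AddCommGroup H] [Module k H] [Coalgebra k H]
    [AddCommGroup M] [Module k M] [AddCommGroup N] [Module k N]
    [AddCommGroup P] [Module k P]
    (μ : M →ₗ[k] N →ₗ[k] P) (f : H →ₗ[k] M) (g : H →ₗ[k] N) : H →ₗ[k] P :=
  TensorProduct.lift μ ∘ₗ TensorProduct.map f g ∘ₗ (Coalgebra.comul : H →ₗ[k] H ⊗[k] H)

/-- The convolution-type map `h ↦ f (h₍₁₎) * g (h₍₂₎)`. -/
def swMul (k : Type*) {H A : Type*} [CommRing k]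
    [AddCommGroup H] [Module k H] [Coalgebra k H] [Ring A] [Algebra k A]
    (f g : H →ₗ[k] A) : H →ₗ[k] A :=
  sw k (LinearMap.mul k A) f g

section ModuleAlgebra

variable (k : Type*) [CommRing k] {H : Type*} [Ring H] [HopfAlgebra k H]
variable {A : Type*} [Ring A] [Algebra k A]

/-- `act : H × A → A` (given as a `k`-bilinear map) makes `A` a left `H`-module algebra:
`(gh) ▷ a = g ▷ (h ▷ a)`, `1 ▷ a = a`, `h ▷ (ab) = (h₍₁₎ ▷ a)(h₍₂₎ ▷ b)` and
`h ▷ 1 = ε(h) 1`. -/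
structure IsModuleAlgebraAction (act : H →ₗ[k] A →ₗ[k] A) : Prop where
  mul_act : ∀ (g h : H) (a : A), act (g * h) a = act g (act h a)
  one_act : ∀ a : A, act 1 a = a
  act_mul : ∀ (h : H) (a b : A), act h (a * b) = swMul k (act.flip a) (act.flip b) h
  act_one : ∀ h : H, act h 1 = Coalgebra.counit (R := k) h • (1 : A)

/-- Membership in `Gl(H,A)`: (i) `𝖺(1) = 1`, (ii) `𝖺(gh) = 𝖺(g₍₁₎)(g₍₂₎ ▷ 𝖺(h))`,
(iii) `(h₍₁₎ ▷ b) 𝖺(h₍₂₎) = 𝖺(h₍₁₎)(h₍₂₎ ▷ b)`. -/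
structure MemGl (act : H →ₗ[k] A →ₗ[k] A) (a : H →ₗ[k] A) : Prop where
  map_one' : a 1 = 1
  map_mul' : ∀ g h : H, a (g * h) = swMul k a (act.flip (a h)) g
  comm' : ∀ (h : H) (b : A), swMul k (act.flip b) a h = swMul k a (act.flip b) h

/-- `J` is a momentum map for the action `act`: it is a unital algebra homomorphism
`H → A` with `h ▷ a = J(h₍₁₎) a J(S(h₍₂₎))`. -/
structure IsMomentumMap (act : H →ₗ[k] A →ₗ[k] A) (J : H →ₗ[k] A) : Prop where
  map_one' : J 1 = 1
  map_mul' : ∀ g h : H, J (g * h) = J g * J h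
  inner' : ∀ (h : H) (a : A),
    act h a = swMul k J (LinearMap.mul k A a ∘ₗ (J ∘ₗ HopfAlgebra.antipode (R := k))) h

end ModuleAlgebra

end EquivariantMorita

namespace EquivariantMorita

section BimodulePart

variable (k : Type*) [CommRing k]
variable {H : Type*} [Ring H] [HopfAlgebra k H]
variable {A : Type*} [Ring A] [Algebra k A]
variable {B : Type*} [Ring B] [Algebra k B]
variable {E : Type*} [AddCommGroup E] [Module k E]

/-- `E` is a unital `(B,A)`-bimodule via the `k`-bilinear left multiplication `lB`
(`lB b x = b · x`) and right multiplication `rA` (`rA a x = x · a`). -/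
structure IsBimodule (lB : B →ₗ[k] E →ₗ[k] E) (rA : A →ₗ[k] E →ₗ[k] E) : Prop where
  one_lsmul : ∀ x : E, lB 1 x = x
  mul_lsmul : ∀ (b b' : B) (x : E), lB (b * b') x = lB b (lB b' x)
  one_rsmul : ∀ x : E, rA 1 x = x
  mul_rsmul : ∀ (a a' : A) (x : E), rA (a * a') x = rA a' (rA a x)
  lsmul_rsmul : ∀ (b : B) (a : A) (x : E), rA a (lB b x) = lB b (rA a x)

/-- `actE` makes the `(B,A)`-bimodule `E` (with multiplications `lB`, `rA`) an
`H`-equivariant bimodule: `(gh) ▷ x = g ▷ (h ▷ x)`, `1 ▷ x = x`,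
`h ▷ (b·x) = (h₍₁₎ ▷ b)·(h₍₂₎ ▷ x)` and `h ▷ (x·a) = (h₍₁₎ ▷ x)·(h₍₂₎ ▷ a)`. -/
structure IsEquivariantBimodule (actB : H →ₗ[k] B →ₗ[k] B) (actA : H →ₗ[k] A →ₗ[k] A)
    (lB : B →ₗ[k] E →ₗ[k] E) (rA : A →ₗ[k] E →ₗ[k] E)
    (actE : H →ₗ[k] E →ₗ[k] E) : Prop where
  mul_act : ∀ (g h : H) (x : E), actE (g * h) x = actE g (actE h x)
  one_act : ∀ x : E, actE 1 x = x
  act_lsmul : ∀ (h : H) (b : B) (x : E),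
    actE h (lB b x) = sw k lB (actB.flip b) (actE.flip x) h
  act_rsmul : ∀ (h : H) (a : A) (x : E),
    actE h (rA a x) = sw k rA.flip (actE.flip x) (actA.flip a) h

/-- The canonical lift `h ▷ x = J^B(h₍₁₎) · (x · J^A(S(h₍₂₎)))` of the `H`-action to a
`(B,A)`-bimodule along momentum maps, as a linear map in `h` for fixed `x`. -/
def momLift (JB : H →ₗ[k] B) (JA : H →ₗ[k] A)
    (lB : B →ₗ[k] E →ₗ[k] E) (rA : A →ₗ[k] E →ₗ[k] E) (x : E) : H →ₗ[k] E :=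
  sw k lB JB (rA.flip x ∘ₗ (JA ∘ₗ HopfAlgebra.antipode (R := k)))

end BimodulePart

end EquivariantMorita


namespace EquivariantMorita

open Coalgebra

/-! ### Auxiliary Sweedler-calculus lemmas -/

section Helpers

variable (k : Type*) [CommRing k]
variable {H : Type*} [AddCommGroup H] [Module k H] [Coalgebra k H]

theorem sw_apply_repr {M N P : Type*}
    [AddCommGroup M] [Module k M] [AddCommGroup N] [Module k N]
    [AddCommGroup P] [Module k P]
    (μ : M →ₗ[k] N →ₗ[k] P) (f : H →ₗ[k] M) (g : H →ₗ[k] N) {h : H} {ι : Type*}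
    (r : Coalgebra.Repr k h ι) :
    sw k μ f g h = ∑ i ∈ r.index, μ (f (r.left i)) (g (r.right i)) := by
  have hc : (Coalgebra.comul (R := k) h) = ∑ i ∈ r.index, r.left i ⊗ₜ[k] r.right i := r.eq.symm
  simp [sw, hc, map_sum]

theorem assoc3 {M N Q P : Type*} [AddCommGroup M] [Module k M] [AddCommGroup N] [Module k N]
    [AddCommGroup Q] [Module k Q] [AddCommGroup P] [Module k P]
    (τ : M →ₗ[k] N →ₗ[k] Q →ₗ[k] P) (f : H →ₗ[k] M) (g : H →ₗ[k] N) (e : H →ₗ[k] Q)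
    {h : H} {ι : Type*} {κ Λ : ι → Type*} (r : Coalgebra.Repr k h ι)
    (s : ∀ i : ι, Coalgebra.Repr k (r.left i) (κ i)) (u : ∀ i : ι, Coalgebra.Repr k (r.right i) (Λ i)) :
    ∑ i ∈ r.index, ∑ j ∈ (s i).index,
        τ (f ((s i).left j)) (g ((s i).right j)) (e (r.right i)) =
    ∑ i ∈ r.index, ∑ j ∈ (u i).index,
        τ (f (r.left i)) (g ((u i).left j)) (e ((u i).right j)) := by
  have h0 := Coalgebra.sum_tmul_tmul_eq (R := k) r s u
  have h1 := congrArg ((TensorProduct.lift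
      ((TensorProduct.lift.equiv (R := k) (σ₁₂ := RingHom.id k) (M := N) (N := Q) (P₂ := P)).toLinearMap ∘ₗ τ)) ∘ₗ
      (TensorProduct.map f (TensorProduct.map g e))) h0
  simpa [map_sum] using h1

theorem sum_counit_smul_left {h : H} {ι : Type*} (r : Coalgebra.Repr k h ι) :
    ∑ i ∈ r.index, (Coalgebra.counit (R := k) (r.right i)) • r.left i = h := by
  have h0 := Coalgebra.sum_tmul_counit_eq (R := k) r
  calc ∑ i ∈ r.index, (Coalgebra.counit (R := k) (r.right i)) • r.left i
      = TensorProduct.rid k H (∑ i ∈ r.index,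
          r.left i ⊗ₜ Coalgebra.counit (R := k) (r.right i)) := by
        rw [map_sum]; simp
    _ = TensorProduct.rid k H (h ⊗ₜ[k] 1) := by rw [h0]
    _ = h := by simp

end Helpers

section HopfHelpers

variable (k : Type*) [CommRing k]
variable {H : Type*} [Ring H] [HopfAlgebra k H]
variable {B : Type*} [Ring B] [Algebra k B]

/-- `∑ J(c₁) * J(S c₂) = ε(c) • 1` for a multiplicative unital `J`. -/
theorem sum_map_mul_antipode (J : H →ₗ[k] B) (h1 : J 1 = 1)
    (hm : ∀ u v : H, J (u * v) = J u * J v) {c : H} {ι : Type*} (u : Coalgebra.Repr k c ι) :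
    ∑ j ∈ u.index, J (u.left j) * J (HopfAlgebra.antipode (R := k) (u.right j)) =
      Coalgebra.counit (R := k) c • 1 := by
  calc ∑ j ∈ u.index, J (u.left j) * J (HopfAlgebra.antipode (R := k) (u.right j))
      = J (∑ j ∈ u.index, u.left j * HopfAlgebra.antipode (R := k) (u.right j)) := by
        rw [map_sum]
        exact Finset.sum_congr rfl fun j _ => (hm _ _).symm
    _ = Coalgebra.counit (R := k) c • 1 := by
        rw [HopfAlgebra.sum_mul_antipode_eq_smul u, map_smul, h1]

/-- `∑ J(S c₁) * J(c₂) = ε(c) • 1` for a multiplicative unital `J`. -/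
theorem sum_map_antipode_mul (J : H →ₗ[k] B) (h1 : J 1 = 1)
    (hm : ∀ u v : H, J (u * v) = J u * J v) {c : H} {ι : Type*} (u : Coalgebra.Repr k c ι) :
    ∑ j ∈ u.index, J (HopfAlgebra.antipode (R := k) (u.left j)) * J (u.right j) =
      Coalgebra.counit (R := k) c • 1 := by
  calc ∑ j ∈ u.index, J (HopfAlgebra.antipode (R := k) (u.left j)) * J (u.right j)
      = J (∑ j ∈ u.index, HopfAlgebra.antipode (R := k) (u.left j) * u.right j) := by
        rw [map_sum]
        exact Finset.sum_congr rfl fun j _ => (hm _ _).symm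
    _ = Coalgebra.counit (R := k) c • 1 := by
        rw [HopfAlgebra.sum_antipode_mul_eq_smul u, map_smul, h1]

/-- A representation of `comul (g * h)` built from representations of `g` and `h`. -/
def Repr.mul {g h : H} {ι κ : Type*} (r : Coalgebra.Repr k g ι) (t : Coalgebra.Repr k h κ) :
    Coalgebra.Repr k (g * h) (ι × κ) where
  index := r.index ×ˢ t.index
  left := fun p => r.left p.1 * t.left p.2
  right := fun p => r.right p.1 * t.right p.2
  eq := by
    rw [Finset.sum_product, Bialgebra.comul_mul (R := k), ← r.eq, ← t.eq, Finset.sum_mul_sum]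
    simp [Algebra.TensorProduct.tmul_mul_tmul]

end HopfHelpers

end EquivariantMorita

namespace EquivariantMorita

open Coalgebra

section Main

variable (k : Type*) [CommRing k]
variable {H : Type*} [Ring H] [HopfAlgebra k H]
variable {A : Type*} [Ring A] [Algebra k A]
variable {B : Type*} [Ring B] [Algebra k B]
variable {E : Type*} [AddCommGroup E] [Module k E]

/-- The map `h ↦ (x ↦ (h₍₁₎ ▷ x) · J(h₍₂₎))`. -/
def phi (actE : H →ₗ[k] E →ₗ[k] E) (rA : A →ₗ[k] E →ₗ[k] E) (JA : H →ₗ[k] A) :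
    H →ₗ[k] E →ₗ[k] E :=
  sw k ((LinearMap.llcomp k E E E).flip) actE (rA ∘ₗ JA)

theorem phi_apply (actE : H →ₗ[k] E →ₗ[k] E) (rA : A →ₗ[k] E →ₗ[k] E) (JA : H →ₗ[k] A)
    {h : H} {ι : Type*} (r : Coalgebra.Repr k h ι) (x : E) :
    phi k actE rA JA h x = ∑ i ∈ r.index, rA (JA (r.right i)) (actE (r.left i) x) := by
  rw [phi, sw_apply_repr k _ _ _ r]
  simp

theorem phi_one (actE : H →ₗ[k] E →ₗ[k] E) (rA : A →ₗ[k] E →ₗ[k] E) (JA : H →ₗ[k] A)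
    (actA : H →ₗ[k] A →ₗ[k] A)
    (hJA : IsMomentumMap k actA JA) (lB : B →ₗ[k] E →ₗ[k] E) (hbim : IsBimodule k lB rA)
    (actB : H →ₗ[k] B →ₗ[k] B) (heq : IsEquivariantBimodule k actB actA lB rA actE) (x : E) :
    phi k actE rA JA 1 x = x := by
  have : phi k actE rA JA 1 = (LinearMap.llcomp k E E E).flip (actE 1) (rA (JA 1)) := by
    simp [phi, sw, Algebra.TensorProduct.one_def]
  rw [this]
  simp only [LinearMap.flip_apply, LinearMap.llcomp_apply, hJA.map_one']
  rw [heq.one_act, hbim.one_rsmul]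

theorem key_comm_A (actA : H →ₗ[k] A →ₗ[k] A) (JA : H →ₗ[k] A)
    (hJA : IsMomentumMap k actA JA) {c : H} {ι : Type*} (u : Coalgebra.Repr k c ι) (a : A) :
    ∑ j ∈ u.index, actA (u.left j) a * JA (u.right j) = JA c * a := by
  set S : H →ₗ[k] H := HopfAlgebra.antipode (R := k) with hS
  set τ : A →ₗ[k] A →ₗ[k] A →ₗ[k] A :=
    (((LinearMap.mul k A).compr₂ (LinearMap.mul k A)).compl₂ (LinearMap.mul k A a)) with hτ
  have hτapp : ∀ x y z : A, τ x y z = x * (a * y) * z := fun x y z => rfl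
  have hexp : ∀ j, actA (u.left j) a
      = ∑ l ∈ (ℛ k (u.left j)).index,
          JA ((ℛ k (u.left j)).left l) * (a * JA (S ((ℛ k (u.left j)).right l))) := by
    intro j
    rw [hJA.inner' (u.left j) a, swMul, sw_apply_repr k _ _ _ (ℛ k (u.left j))]
    simp [hS]
  calc ∑ j ∈ u.index, actA (u.left j) a * JA (u.right j)
      = ∑ j ∈ u.index, ∑ l ∈ (ℛ k (u.left j)).index,
          τ (JA ((ℛ k (u.left j)).left l)) ((JA ∘ₗ S) ((ℛ k (u.left j)).right l))
            (JA (u.right j)) := by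
        refine Finset.sum_congr rfl fun j _ => ?_
        rw [hexp j, Finset.sum_mul]
        exact Finset.sum_congr rfl fun l _ => by rw [hτapp]; simp [mul_assoc]
    _ = ∑ j ∈ u.index, ∑ l ∈ (ℛ k (u.right j)).index,
          τ (JA (u.left j)) ((JA ∘ₗ S) ((ℛ k (u.right j)).left l))
            (JA ((ℛ k (u.right j)).right l)) :=
        assoc3 k τ JA (JA ∘ₗ S) JA u _ _
    _ = ∑ j ∈ u.index, Coalgebra.counit (R := k) (u.right j) • (JA (u.left j) * a) := by
        refine Finset.sum_congr rfl fun j _ => ?_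
        have : ∀ l, τ (JA (u.left j)) ((JA ∘ₗ S) ((ℛ k (u.right j)).left l))
            (JA ((ℛ k (u.right j)).right l))
            = (JA (u.left j) * a) *
              (JA (S ((ℛ k (u.right j)).left l)) * JA ((ℛ k (u.right j)).right l)) := by
          intro l; rw [hτapp]; simp [mul_assoc]
        rw [Finset.sum_congr rfl fun l _ => this l, ← Finset.mul_sum,
          sum_map_antipode_mul k JA hJA.map_one' hJA.map_mul' (ℛ k (u.right j))]
        rw [mul_smul_comm, mul_one]
    _ = JA c * a := by
        have : ∀ j, Coalgebra.counit (R := k) (u.right j) • (JA (u.left j) * a)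
            = (JA (Coalgebra.counit (R := k) (u.right j) • u.left j)) * a := by
          intro j; rw [map_smul, smul_mul_assoc]
        rw [Finset.sum_congr rfl fun j _ => this j, ← Finset.sum_mul, ← map_sum,
          sum_counit_smul_left k u]

theorem phi_comm_rA (actA : H →ₗ[k] A →ₗ[k] A) (actB : H →ₗ[k] B →ₗ[k] B)
    (lB : B →ₗ[k] E →ₗ[k] E) (rA : A →ₗ[k] E →ₗ[k] E) (actE : H →ₗ[k] E →ₗ[k] E)
    (JA : H →ₗ[k] A) (hJA : IsMomentumMap k actA JA) (hbim : IsBimodule k lB rA)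
    (heq : IsEquivariantBimodule k actB actA lB rA actE)
    (h : H) (a : A) (x : E) :
    phi k actE rA JA h (rA a x) = rA a (phi k actE rA JA h x) := by
  set r := ℛ k h with hr
  set τ : E →ₗ[k] A →ₗ[k] A →ₗ[k] E :=
    ((LinearMap.lflip (R₀ := k)).toLinearMap ∘ₗ ((LinearMap.mul k A).compr₂ rA)).flip with hτ
  have hτapp : ∀ (y : E) (b c : A), τ y b c = rA (b * c) y := fun y b c => rfl
  calc phi k actE rA JA h (rA a x)
      = ∑ i ∈ r.index, rA (JA (r.right i)) (actE (r.left i) (rA a x)) :=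
        phi_apply k actE rA JA r (rA a x)
    _ = ∑ i ∈ r.index, ∑ j ∈ (ℛ k (r.left i)).index,
          τ ((actE.flip x) ((ℛ k (r.left i)).left j))
            ((actA.flip a) ((ℛ k (r.left i)).right j)) (JA (r.right i)) := by
        refine Finset.sum_congr rfl fun i _ => ?_
        rw [heq.act_rsmul (r.left i) a x, sw_apply_repr k _ _ _ (ℛ k (r.left i)), map_sum]
        refine Finset.sum_congr rfl fun j _ => ?_
        rw [hτapp]
        simp only [LinearMap.flip_apply]
        exact (hbim.mul_rsmul _ _ _).symm
    _ = ∑ i ∈ r.index, ∑ j ∈ (ℛ k (r.right i)).index,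
          τ ((actE.flip x) (r.left i)) ((actA.flip a) ((ℛ k (r.right i)).left j))
            (JA ((ℛ k (r.right i)).right j)) :=
        assoc3 k τ (actE.flip x) (actA.flip a) JA r _ _
    _ = ∑ i ∈ r.index, rA (JA (r.right i) * a) (actE (r.left i) x) := by
        refine Finset.sum_congr rfl fun i _ => ?_
        have h1 : ∀ j ∈ (ℛ k (r.right i)).index,
            τ ((actE.flip x) (r.left i)) ((actA.flip a) ((ℛ k (r.right i)).left j))
              (JA ((ℛ k (r.right i)).right j))
            = rA (actA ((ℛ k (r.right i)).left j) a * JA ((ℛ k (r.right i)).right j))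
                (actE (r.left i) x) := by
          intro j _; rw [hτapp]; simp
        rw [Finset.sum_congr rfl h1]
        have h2 : ∑ j ∈ (ℛ k (r.right i)).index,
            rA (actA ((ℛ k (r.right i)).left j) a * JA ((ℛ k (r.right i)).right j))
              (actE (r.left i) x)
            = rA (∑ j ∈ (ℛ k (r.right i)).index,
                actA ((ℛ k (r.right i)).left j) a * JA ((ℛ k (r.right i)).right j))
                (actE (r.left i) x) := by
          rw [map_sum, LinearMap.coe_sum, Finset.sum_apply]
        rw [h2, key_comm_A k actA JA hJA (ℛ k (r.right i)) a]
    _ = rA a (phi k actE rA JA h x) := by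
        rw [phi_apply k actE rA JA r x, map_sum]
        exact Finset.sum_congr rfl fun i _ => hbim.mul_rsmul _ _ _

theorem phi_mul (actA : H →ₗ[k] A →ₗ[k] A) (actB : H →ₗ[k] B →ₗ[k] B)
    (lB : B →ₗ[k] E →ₗ[k] E) (rA : A →ₗ[k] E →ₗ[k] E) (actE : H →ₗ[k] E →ₗ[k] E)
    (JA : H →ₗ[k] A) (hJA : IsMomentumMap k actA JA) (hbim : IsBimodule k lB rA)
    (heq : IsEquivariantBimodule k actB actA lB rA actE)
    (g h : H) (x : E) :
    phi k actE rA JA (g * h) x = phi k actE rA JA g (phi k actE rA JA h x) := by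
  set r := ℛ k g with hrdef
  set t := ℛ k h with htdef
  calc phi k actE rA JA (g * h) x
      = ∑ i ∈ r.index, ∑ j ∈ t.index,
          rA (JA (r.right i * t.right j)) (actE (r.left i * t.left j) x) := by
        have h0 : phi k actE rA JA (g * h) x
            = ∑ p ∈ r.index ×ˢ t.index,
                rA (JA (r.right p.1 * t.right p.2)) (actE (r.left p.1 * t.left p.2) x) :=
          phi_apply k actE rA JA (Repr.mul k r t) x
        rw [h0, Finset.sum_product]
    _ = ∑ j ∈ t.index, ∑ i ∈ r.index,
          rA (JA (t.right j)) (rA (JA (r.right i)) (actE (r.left i) (actE (t.left j) x))) := by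
        rw [Finset.sum_comm]
        refine Finset.sum_congr rfl fun j _ => Finset.sum_congr rfl fun i _ => ?_
        rw [hJA.map_mul', hbim.mul_rsmul, heq.mul_act]
    _ = phi k actE rA JA g (phi k actE rA JA h x) := by
        rw [phi_apply k actE rA JA t x, map_sum]
        refine Finset.sum_congr rfl fun j _ => ?_
        rw [phi_comm_rA k actA actB lB rA actE JA hJA hbim heq,
          phi_apply k actE rA JA r (actE (t.left j) x), map_sum]

theorem Jprime_comm (actA : H →ₗ[k] A →ₗ[k] A) (actB : H →ₗ[k] B →ₗ[k] B)
    (lB : B →ₗ[k] E →ₗ[k] E) (rA : A →ₗ[k] E →ₗ[k] E) (actE : H →ₗ[k] E →ₗ[k] E)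
    (JA : H →ₗ[k] A) (hbim : IsBimodule k lB rA)
    (heq : IsEquivariantBimodule k actB actA lB rA actE)
    (hinj : ∀ b b' : B, (∀ x : E, lB b x = lB b' x) → b = b')
    (J' : H →ₗ[k] B) (hlift : ∀ (h : H) (x : E), lB (J' h) x = phi k actE rA JA h x)
    (h : H) (b : B) {ι : Type*} (r : Coalgebra.Repr k h ι) :
    ∑ i ∈ r.index, actB (r.left i) b * J' (r.right i) = J' h * b := by
  set τ : (E →ₗ[k] E) →ₗ[k] E →ₗ[k] (E →ₗ[k] E) →ₗ[k] E :=
    (LinearMap.id : (E →ₗ[k] E) →ₗ[k] (E →ₗ[k] E)).compr₂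
      ((LinearMap.id : (E →ₗ[k] E) →ₗ[k] (E →ₗ[k] E)).flip) with hτ
  have hτapp : ∀ (F : E →ₗ[k] E) (y : E) (G : E →ₗ[k] E), τ F y G = G (F y) :=
    fun F y G => rfl
  refine hinj _ _ fun x => ?_
  calc lB (∑ i ∈ r.index, actB (r.left i) b * J' (r.right i)) x
      = ∑ i ∈ r.index, ∑ j ∈ (ℛ k (r.right i)).index,
          τ ((lB ∘ₗ actB.flip b) (r.left i))
            ((actE.flip x) ((ℛ k (r.right i)).left j))
            ((rA ∘ₗ JA) ((ℛ k (r.right i)).right j)) := by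
        rw [map_sum, LinearMap.coe_sum, Finset.sum_apply]
        refine Finset.sum_congr rfl fun i _ => ?_
        rw [hbim.mul_lsmul, hlift, phi_apply k actE rA JA (ℛ k (r.right i)) x, map_sum]
        refine Finset.sum_congr rfl fun j _ => ?_
        rw [hτapp]
        simp only [LinearMap.comp_apply, LinearMap.flip_apply]
        exact (hbim.lsmul_rsmul _ _ _).symm
    _ = ∑ i ∈ r.index, ∑ j ∈ (ℛ k (r.left i)).index,
          τ ((lB ∘ₗ actB.flip b) ((ℛ k (r.left i)).left j))
            ((actE.flip x) ((ℛ k (r.left i)).right j))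
            ((rA ∘ₗ JA) (r.right i)) :=
        (assoc3 k τ (lB ∘ₗ actB.flip b) (actE.flip x) (rA ∘ₗ JA) r _ _).symm
    _ = ∑ i ∈ r.index, rA (JA (r.right i)) (actE (r.left i) (lB b x)) := by
        refine Finset.sum_congr rfl fun i _ => ?_
        have h1 : ∀ j ∈ (ℛ k (r.left i)).index,
            τ ((lB ∘ₗ actB.flip b) ((ℛ k (r.left i)).left j))
              ((actE.flip x) ((ℛ k (r.left i)).right j))
              ((rA ∘ₗ JA) (r.right i))
            = rA (JA (r.right i))
                (lB (actB ((ℛ k (r.left i)).left j) b)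
                  (actE ((ℛ k (r.left i)).right j) x)) := fun j _ => rfl
        rw [Finset.sum_congr rfl h1, ← map_sum]
        congr 1
        rw [heq.act_lsmul (r.left i) b x, sw_apply_repr k _ _ _ (ℛ k (r.left i))]
        simp
    _ = lB (J' h * b) x := by
        rw [← phi_apply k actE rA JA r (lB b x), ← hlift, ← hbim.mul_lsmul]

/-- Convolution cancellation: `∑ (f ⋆ J')(h₁) * J'(S h₂) = f h` when `J'` is a unital
algebra map. -/
theorem conv_cancel (J' : H →ₗ[k] B) (h1 : J' 1 = 1)
    (hm : ∀ u v : H, J' (u * v) = J' u * J' v)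
    (f : H →ₗ[k] B) (h : H) {ι : Type*} (r : Coalgebra.Repr k h ι) :
    ∑ i ∈ r.index, (swMul k f J') (r.left i)
        * J' (HopfAlgebra.antipode (R := k) (r.right i)) = f h := by
  set S : H →ₗ[k] H := HopfAlgebra.antipode (R := k) with hS
  set τ : B →ₗ[k] B →ₗ[k] B →ₗ[k] B :=
    (LinearMap.mul k B).compr₂ (LinearMap.mul k B) with hτ
  have hτapp : ∀ x y z : B, τ x y z = x * y * z := fun x y z => rfl
  calc ∑ i ∈ r.index, (swMul k f J') (r.left i) * J' (S (r.right i))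
      = ∑ i ∈ r.index, ∑ j ∈ (ℛ k (r.left i)).index,
          τ (f ((ℛ k (r.left i)).left j)) (J' ((ℛ k (r.left i)).right j))
            ((J' ∘ₗ S) (r.right i)) := by
        refine Finset.sum_congr rfl fun i _ => ?_
        rw [swMul, sw_apply_repr k _ _ _ (ℛ k (r.left i)), Finset.sum_mul]
        exact Finset.sum_congr rfl fun j _ => rfl
    _ = ∑ i ∈ r.index, ∑ j ∈ (ℛ k (r.right i)).index,
          τ (f (r.left i)) (J' ((ℛ k (r.right i)).left j))
            ((J' ∘ₗ S) ((ℛ k (r.right i)).right j)) :=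
        assoc3 k τ f J' (J' ∘ₗ S) r _ _
    _ = ∑ i ∈ r.index, Coalgebra.counit (R := k) (r.right i) • f (r.left i) := by
        refine Finset.sum_congr rfl fun i _ => ?_
        have h2 : ∀ j, τ (f (r.left i)) (J' ((ℛ k (r.right i)).left j))
            ((J' ∘ₗ S) ((ℛ k (r.right i)).right j))
            = f (r.left i) * (J' ((ℛ k (r.right i)).left j)
                * J' (S ((ℛ k (r.right i)).right j))) := by
          intro j; rw [hτapp, mul_assoc]; rfl
        rw [Finset.sum_congr rfl fun j _ => h2 j, ← Finset.mul_sum,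
          sum_map_mul_antipode k J' h1 hm (ℛ k (r.right i)), mul_smul_comm, mul_one]
    _ = f h := by
        have h3 : ∀ i, Coalgebra.counit (R := k) (r.right i) • f (r.left i)
            = f (Coalgebra.counit (R := k) (r.right i) • r.left i) := by
          intro i; rw [map_smul]
        rw [Finset.sum_congr rfl fun i _ => h3 i, ← map_sum, sum_counit_smul_left k r]

theorem Jprime_inner (actB : H →ₗ[k] B →ₗ[k] B)
    (J' : H →ₗ[k] B) (h1 : J' 1 = 1) (hm : ∀ u v : H, J' (u * v) = J' u * J' v)
    (hcomm : ∀ (h : H) (b : B),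
      ∑ i ∈ (ℛ k h).index, actB ((ℛ k h).left i) b * J' ((ℛ k h).right i) = J' h * b)
    (h : H) (b : B) :
    actB h b
      = swMul k J' (LinearMap.mul k B b ∘ₗ (J' ∘ₗ HopfAlgebra.antipode (R := k))) h := by
  set S : H →ₗ[k] H := HopfAlgebra.antipode (R := k) with hS
  set R : H →ₗ[k] B := swMul k J' (LinearMap.mul k B b ∘ₗ (J' ∘ₗ S)) with hR
  set τ : B →ₗ[k] B →ₗ[k] B →ₗ[k] B :=
    (((LinearMap.mul k B).compr₂ (LinearMap.mul k B)).compl₂ (LinearMap.mul k B b)) with hτ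
  have hτapp : ∀ x y z : B, τ x y z = x * (b * y) * z := fun x y z => rfl
  have stepA : ∀ c : H, swMul k (actB.flip b) J' c = J' c * b := by
    intro c
    rw [swMul, sw_apply_repr k _ _ _ (ℛ k c)]
    simpa using hcomm c b
  have stepB : ∀ c : H, swMul k R J' c = J' c * b := by
    intro c
    set r := ℛ k c with hrc
    calc swMul k R J' c
        = ∑ i ∈ r.index, R (r.left i) * J' (r.right i) := by
          rw [swMul, sw_apply_repr k _ _ _ r]; simp
      _ = ∑ i ∈ r.index, ∑ j ∈ (ℛ k (r.left i)).index,
            τ (J' ((ℛ k (r.left i)).left j)) ((J' ∘ₗ S) ((ℛ k (r.left i)).right j))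
              (J' (r.right i)) := by
          refine Finset.sum_congr rfl fun i _ => ?_
          rw [hR, swMul, sw_apply_repr k _ _ _ (ℛ k (r.left i)), Finset.sum_mul]
          refine Finset.sum_congr rfl fun j _ => ?_
          rw [hτapp]
          simp [mul_assoc]
      _ = ∑ i ∈ r.index, ∑ j ∈ (ℛ k (r.right i)).index,
            τ (J' (r.left i)) ((J' ∘ₗ S) ((ℛ k (r.right i)).left j))
              (J' ((ℛ k (r.right i)).right j)) :=
          assoc3 k τ J' (J' ∘ₗ S) J' r _ _
      _ = ∑ i ∈ r.index, Coalgebra.counit (R := k) (r.right i) • (J' (r.left i) * b) := by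
          refine Finset.sum_congr rfl fun i _ => ?_
          have h2 : ∀ j, τ (J' (r.left i)) ((J' ∘ₗ S) ((ℛ k (r.right i)).left j))
              (J' ((ℛ k (r.right i)).right j))
              = (J' (r.left i) * b) * (J' (S ((ℛ k (r.right i)).left j))
                  * J' ((ℛ k (r.right i)).right j)) := by
            intro j; rw [hτapp]; simp [mul_assoc]
          rw [Finset.sum_congr rfl fun j _ => h2 j, ← Finset.mul_sum,
            sum_map_antipode_mul k J' h1 hm (ℛ k (r.right i)), mul_smul_comm, mul_one]
      _ = J' c * b := by
          have h3 : ∀ i, Coalgebra.counit (R := k) (r.right i) • (J' (r.left i) * b)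
              = (J' (Coalgebra.counit (R := k) (r.right i) • r.left i)) * b := by
            intro i; rw [map_smul, smul_mul_assoc]
          rw [Finset.sum_congr rfl fun i _ => h3 i, ← Finset.sum_mul, ← map_sum,
            sum_counit_smul_left k r]
  calc actB h b = (actB.flip b) h := rfl
    _ = ∑ i ∈ (ℛ k h).index, (swMul k (actB.flip b) J') ((ℛ k h).left i)
          * J' (S ((ℛ k h).right i)) :=
        (conv_cancel k J' h1 hm (actB.flip b) h (ℛ k h)).symm
    _ = ∑ i ∈ (ℛ k h).index, (swMul k R J') ((ℛ k h).left i)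
          * J' (S ((ℛ k h).right i)) := by
        refine Finset.sum_congr rfl fun i _ => ?_
        rw [stepA, ← stepB]
    _ = R h := conv_cancel k J' h1 hm R h (ℛ k h)

end Main

end EquivariantMorita
namespace EquivariantMorita

open Coalgebra

/-- If there is an `H`-equivariant `(B,A)`-bimodule `E` whose
left-multiplication map `λ : B → End_A(E)` is bijective, and the `H`-action on `A` admits
a momentum map, then the `H`-action on `B` admits a momentum map. In particular, the
existence of a momentum map is invariant under `H`-equivariant Morita equivalence. -/
theorem momentumMap_exists_of_equivariant_bimodule
    (k : Type*) [CommRing k]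
    {H : Type*} [Ring H] [HopfAlgebra k H]
    {A : Type*} [Ring A] [Algebra k A]
    {B : Type*} [Ring B] [Algebra k B]
    {E : Type*} [AddCommGroup E] [Module k E]
    (actA : H →ₗ[k] A →ₗ[k] A) (hactA : IsModuleAlgebraAction k actA)
    (actB : H →ₗ[k] B →ₗ[k] B) (hactB : IsModuleAlgebraAction k actB)
    (lB : B →ₗ[k] E →ₗ[k] E) (rA : A →ₗ[k] E →ₗ[k] E) (hbim : IsBimodule k lB rA)
    (actE : H →ₗ[k] E →ₗ[k] E)
    (heq : IsEquivariantBimodule k actB actA lB rA actE)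
    (hinj : ∀ b b' : B, (∀ x : E, lB b x = lB b' x) → b = b')
    (hsurj : ∀ φ : E →ₗ[k] E, (∀ (a : A) (x : E), φ (rA a x) = rA a (φ x)) →
      ∃ b : B, ∀ x : E, φ x = lB b x) :
    (∃ J : H →ₗ[k] A, IsMomentumMap k actA J) →
      ∃ J' : H →ₗ[k] B, IsMomentumMap k actB J' := by
  rintro ⟨JA, hJA⟩
  have hcomm0 : ∀ (h : H) (a : A) (x : E),
      phi k actE rA JA h (rA a x) = rA a (phi k actE rA JA h x) :=
    phi_comm_rA k actA actB lB rA actE JA hJA hbim heq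
  have hchoice : ∀ h : H, ∃ b : B, ∀ x : E, phi k actE rA JA h x = lB b x :=
    fun h => hsurj (phi k actE rA JA h) (fun a x => hcomm0 h a x)
  choose Jf hJf using hchoice
  have hliftf : ∀ (h : H) (x : E), lB (Jf h) x = phi k actE rA JA h x :=
    fun h x => (hJf h x).symm
  have hadd : ∀ g h : H, Jf (g + h) = Jf g + Jf h := by
    intro g h
    refine hinj _ _ fun x => ?_
    simp only [map_add, LinearMap.add_apply, hliftf]
  have hsmul : ∀ (c : k) (h : H), Jf (c • h) = c • Jf h := by
    intro c h
    refine hinj _ _ fun x => ?_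
    simp only [map_smul, LinearMap.smul_apply, hliftf]
  set J' : H →ₗ[k] B :=
    { toFun := Jf, map_add' := hadd, map_smul' := fun c h => by simpa using hsmul c h }
    with hJ'def
  have hlift : ∀ (h : H) (x : E), lB (J' h) x = phi k actE rA JA h x := hliftf
  have hone : J' 1 = 1 := by
    refine hinj _ _ fun x => ?_
    rw [hlift, phi_one k actE rA JA actA hJA lB hbim actB heq x, hbim.one_lsmul]
  have hmul : ∀ g h : H, J' (g * h) = J' g * J' h := by
    intro g h
    refine hinj _ _ fun x => ?_
    rw [hlift, phi_mul k actA actB lB rA actE JA hJA hbim heq g h x, ← hlift h x,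
      ← hlift g (lB (J' h) x), ← hbim.mul_lsmul]
  have hcomm : ∀ (h : H) (b : B),
      ∑ i ∈ (ℛ k h).index, actB ((ℛ k h).left i) b * J' ((ℛ k h).right i) = J' h * b :=
    fun h b => Jprime_comm k actA actB lB rA actE JA hbim heq hinj J' hlift h b (ℛ k h)
  exact ⟨J', hone, hmul, fun h b => Jprime_inner k actB J' hone hmul hcomm h b⟩

end EquivariantMorita
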